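/- arXiv:1701.04050 — 4 statements merged into one kernel-verified Lean document; each statement's English description precedes it below -/
import Mathlib

section
/- Let a, λ ∈ ℝ with λ > −1 and |a| ≤ 1. Suppose F : ℝ → ℝ is odd, continuously differentiable, bounded, with F, F' ∈ L²(ℝ), and h : ℝ → ℝ is the (principal-value) Hilbert transform of F, with h bounded and h ∈ L²(ℝ). Assume that for every z > 0 the profile equation F(z) + ((1+λ)z − a·∫₀^z h(s) ds)·F'(z) + 2·F(z)·h(z) = 0 holds. Then there exists a constant C > 0 such that |F(z)| ≤ C·|z|^{−1/(1+λ)} for all |z| ≥ 1; in particular F belongs to weak L^{1+λ} near infinity and the corresponding self-similar solution ω(t,x) = (1/(1−t))·F(x/(1−t)^{1+λ}) is uniformly bounded on {|x| ≥ b} × [0,1] for every b > 0. -/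
open MeasureTheory Filter

/-- `h` is the pointwise (principal-value) Hilbert transform of `f`. -/
def IsPVHilbert (f h : ℝ → ℝ) : Prop :=
  ∀ x : ℝ, Tendsto
    (fun ε : ℝ => (Real.pi)⁻¹ * ∫ y in {y : ℝ | ε < |x - y|}, f y / (x - y))
    (nhdsWithin 0 (Set.Ioi 0)) (nhds (h x))

set_option maxHeartbeats 1000000 in
/-- Decay of self-similar profiles: a bounded odd `C¹ ∩ L²` profile solving the
self-similar profile equation decays like `|z|^{-1/(1+λ)}` at infinity. -/
theorem profile_decay (a lam : ℝ) (hlam : -1 < lam) (ha : |a| ≤ 1)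
    (F h : ℝ → ℝ)
    (hFodd : ∀ z : ℝ, F (-z) = -F z)
    (hFC1 : ContDiff ℝ 1 F)
    (hFbdd : ∃ M : ℝ, ∀ z : ℝ, |F z| ≤ M)
    (hFL2 : MemLp F 2 (volume : Measure ℝ))
    (hF'L2 : MemLp (deriv F) 2 (volume : Measure ℝ))
    (hHT : IsPVHilbert F h)
    (hhbdd : ∃ M : ℝ, ∀ z : ℝ, |h z| ≤ M)
    (hhL2 : MemLp h 2 (volume : Measure ℝ))
    (heq : ∀ z : ℝ, 0 < z →
      F z + ((1 + lam) * z - a * ∫ s in (0:ℝ)..z, h s) * deriv F z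
        + 2 * F z * h z = 0) :
    ∃ C : ℝ, 0 < C ∧ ∀ z : ℝ, 1 ≤ |z| → |F z| ≤ C * |z| ^ (-(1 / (1 + lam))) := by
  classical
  obtain ⟨M, hM⟩ := hFbdd
  obtain ⟨Mh, hMh⟩ := hhbdd
  have hb0 : (0:ℝ) < 1 + lam := by linarith
  have hM0 : 0 ≤ M := (abs_nonneg _).trans (hM 0)
  have hMh0 : 0 ≤ Mh := (abs_nonneg _).trans (hMh 0)
  have hFc : Continuous F := hFC1.continuous
  have hF'c : Continuous (deriv F) := hFC1.continuous_deriv le_rfl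
  have hFd : ∀ x : ℝ, HasDerivAt F (deriv F x) x := fun x =>
    ((hFC1.differentiable one_ne_zero) x).hasDerivAt
  have hmeas : AEStronglyMeasurable h volume := hhL2.aestronglyMeasurable
  have hsqint : Integrable (fun s : ℝ => h s ^ 2) volume :=
    (memLp_two_iff_integrable_sq hmeas).mp hhL2
  set Ih : ℝ := ∫ s : ℝ, h s ^ 2 with hIhdef
  have hIh0 : 0 ≤ Ih := integral_nonneg fun s => sq_nonneg _
  have hInth : ∀ p q : ℝ, IntervalIntegrable h volume p q := by
    intro p q
    rw [intervalIntegrable_iff]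
    exact Measure.integrableOn_of_bounded (measure_Ioc_lt_top).ne hmeas
      (ae_of_all _ fun x => by simpa [Real.norm_eq_abs] using hMh x)
  have hIntsq : ∀ p q : ℝ, IntervalIntegrable (fun s : ℝ => h s ^ 2) volume p q :=
    fun p q => hsqint.intervalIntegrable
  have hsqle : ∀ p q : ℝ, p ≤ q → (∫ s in p..q, h s ^ 2) ≤ Ih := by
    intro p q hpq
    rw [intervalIntegral.integral_of_le hpq]
    exact setIntegral_le_integral hsqint (ae_of_all _ fun s => sq_nonneg _)
  set c : ℝ := (Ih + 1) / 2 with hcdef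
  have hc0 : 0 < c := by positivity
  -- bound on the primitive of h
  have haH : ∀ s : ℝ, 0 ≤ s → |a * ∫ t in (0:ℝ)..s, h t| ≤ c * Real.sqrt s := by
    intro s hs
    rcases eq_or_lt_of_le hs with hs0 | hs0
    · simp [← hs0]
    have hr0 : 0 < Real.sqrt s := Real.sqrt_pos.mpr hs0
    have hr2 : Real.sqrt s * Real.sqrt s = s := Real.mul_self_sqrt hs
    have step1 : |∫ t in (0:ℝ)..s, h t| ≤ ∫ t in (0:ℝ)..s, |h t| :=
      intervalIntegral.abs_integral_le_integral_abs hs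
    have hint2 : IntervalIntegrable
        (fun t : ℝ => (Real.sqrt s * h t ^ 2 + 1 / Real.sqrt s) / 2) volume 0 s :=
      (((hIntsq 0 s).const_mul _).add intervalIntegrable_const).div_const 2
    have step2 : (∫ t in (0:ℝ)..s, |h t|)
        ≤ ∫ t in (0:ℝ)..s, (Real.sqrt s * h t ^ 2 + 1 / Real.sqrt s) / 2 := by
      refine intervalIntegral.integral_mono_on hs (hInth 0 s).abs hint2 ?_
      intro t _
      rw [le_div_iff₀ (by norm_num : (0:ℝ) < 2)]
      have e : Real.sqrt s * h t ^ 2 + 1 / Real.sqrt s - |h t| * 2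
          = (Real.sqrt s * |h t| - 1) ^ 2 / Real.sqrt s := by
        rw [← sq_abs (h t)]
        field_simp
        ring
      have e2 := div_nonneg (sq_nonneg (Real.sqrt s * |h t| - 1)) hr0.le
      linarith [e, e2]
    have step3 : (∫ t in (0:ℝ)..s, (Real.sqrt s * h t ^ 2 + 1 / Real.sqrt s) / 2)
        = ((Real.sqrt s * ∫ t in (0:ℝ)..s, h t ^ 2) + s * (1 / Real.sqrt s)) / 2 := by
      rw [intervalIntegral.integral_div, intervalIntegral.integral_add
        ((hIntsq 0 s).const_mul _) intervalIntegrable_const,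
        intervalIntegral.integral_const_mul, intervalIntegral.integral_const]
      simp [smul_eq_mul]
    have step4 : ((Real.sqrt s * ∫ t in (0:ℝ)..s, h t ^ 2) + s * (1 / Real.sqrt s)) / 2
        ≤ c * Real.sqrt s := by
      have h1 : (∫ t in (0:ℝ)..s, h t ^ 2) ≤ Ih := hsqle 0 s hs
      have h2 : s * (1 / Real.sqrt s) = Real.sqrt s := by
        field_simp
        rw [Real.sq_sqrt hs]
      rw [h2, hcdef]
      have h3 : Real.sqrt s * ∫ t in (0:ℝ)..s, h t ^ 2 ≤ Real.sqrt s * Ih :=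
        mul_le_mul_of_nonneg_left h1 hr0.le
      linarith [h3]
    calc |a * ∫ t in (0:ℝ)..s, h t| ≤ 1 * |∫ t in (0:ℝ)..s, h t| := by
          rw [abs_mul]
          exact mul_le_mul_of_nonneg_right ha (abs_nonneg _)
      _ = |∫ t in (0:ℝ)..s, h t| := one_mul _
      _ ≤ c * Real.sqrt s := le_trans step1 (le_trans step2 (step3 ▸ step4))
  -- choice of the threshold z₀
  set z₀ : ℝ := max 1 ((2 * c / (1 + lam)) ^ 2) with hz₀def
  have hz₀1 : (1:ℝ) ≤ z₀ := le_max_left _ _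
  have hz₀pos : (0:ℝ) < z₀ := lt_of_lt_of_le one_pos hz₀1
  -- lower bound for the drift coefficient
  have hD : ∀ s : ℝ, z₀ ≤ s →
      (1 + lam) * s / 2 ≤ (1 + lam) * s - a * ∫ t in (0:ℝ)..s, h t := by
    intro s hs
    have hs1 : (1:ℝ) ≤ s := hz₀1.trans hs
    have hs0 : (0:ℝ) < s := lt_of_lt_of_le one_pos hs1
    have h1 := haH s hs0.le
    have h2 : 2 * c / (1 + lam) ≤ Real.sqrt s := by
      have h3 : ((2 * c / (1 + lam)) ^ 2) ≤ s := le_trans (le_max_right 1 _) hs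
      have h4 := Real.sqrt_le_sqrt h3
      rwa [Real.sqrt_sq (by positivity)] at h4
    have h5 : Real.sqrt s * Real.sqrt s = s := Real.mul_self_sqrt hs0.le
    have h6 : c * Real.sqrt s ≤ (1 + lam) * s / 2 := by
      have h7 : 2 * c / (1 + lam) * Real.sqrt s ≤ Real.sqrt s * Real.sqrt s :=
        mul_le_mul_of_nonneg_right h2 (Real.sqrt_nonneg s)
      rw [h5] at h7
      have h8 : 2 * c / (1 + lam) * Real.sqrt s * (1 + lam) = 2 * (c * Real.sqrt s) := by
        field_simp
      linarith [mul_le_mul_of_nonneg_right h7 hb0.le, h8]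
    have h9 := neg_abs_le (a * ∫ t in (0:ℝ)..s, h t)
    have h10 := le_abs_self (a * ∫ t in (0:ℝ)..s, h t)
    linarith
  have hDpos : ∀ s : ℝ, z₀ ≤ s →
      0 < (1 + lam) * s - a * ∫ t in (0:ℝ)..s, h t := by
    intro s hs
    have hs0 : (0:ℝ) < s := lt_of_lt_of_le hz₀pos hs
    have := hD s hs
    have h2 : (0:ℝ) < (1 + lam) * s / 2 := by positivity
    linarith
  -- the profile ODE in explicit form
  have hode : ∀ s : ℝ, z₀ ≤ s → deriv F s
      = -((1 + 2 * h s) / ((1 + lam) * s - a * ∫ t in (0:ℝ)..s, h t)) * F s := by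
    intro s hs
    have hs0 : (0:ℝ) < s := lt_of_lt_of_le hz₀pos hs
    have hD0 : ((1 + lam) * s - a * ∫ t in (0:ℝ)..s, h t) ≠ 0 := (hDpos s hs).ne'
    have e := heq s hs0
    rw [neg_mul, div_mul_eq_mul_div, ← neg_div, eq_div_iff hD0]
    linarith [e]
  -- a uniform Lipschitz-type bound for the ODE, and propagation of zeros
  set K : ℝ := 2 * (1 + 2 * Mh) / ((1 + lam) * z₀) with hKdef
  have hbound : ∀ s : ℝ, z₀ ≤ s → |deriv F s| ≤ K * |F s| := by
    intro s hs
    have hs0 : (0:ℝ) < s := lt_of_lt_of_le hz₀pos hs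
    have hDl : (1 + lam) * z₀ / 2 ≤ (1 + lam) * s - a * ∫ t in (0:ℝ)..s, h t := by
      refine le_trans ?_ (hD s hs)
      have : (1 + lam) * z₀ ≤ (1 + lam) * s := mul_le_mul_of_nonneg_left hs hb0.le
      linarith
    have hDl0 : (0:ℝ) < (1 + lam) * z₀ / 2 := by positivity
    have h1 : |1 + 2 * h s| ≤ 1 + 2 * Mh := by
      calc |1 + 2 * h s| ≤ |(1:ℝ)| + |2 * h s| := abs_add_le _ _
        _ = 1 + 2 * |h s| := by rw [abs_one, abs_mul]; norm_num
        _ ≤ 1 + 2 * Mh := by linarith [hMh s]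
    rw [hode s hs, abs_mul, abs_neg, abs_div]
    have h2 : |1 + 2 * h s| / |(1 + lam) * s - a * ∫ t in (0:ℝ)..s, h t|
        ≤ (1 + 2 * Mh) / ((1 + lam) * z₀ / 2) := by
      rw [abs_of_pos (hDpos s hs)]
      exact div_le_div₀ (by linarith) h1 hDl0 hDl
    have h3 : (1 + 2 * Mh) / ((1 + lam) * z₀ / 2) = K := by
      rw [hKdef]; field_simp
    exact mul_le_mul_of_nonneg_right (h3 ▸ h2) (abs_nonneg _)
  have hzero : ∀ s₁ s₂ : ℝ, z₀ ≤ s₁ → s₁ ≤ s₂ → F s₁ = 0 → F s₂ = 0 := by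
    intro s₁ s₂ hs₁ h12 hF1
    have key := norm_le_gronwallBound_of_norm_deriv_right_le (f := F) (f' := deriv F)
      (δ := 0) (K := K) (ε := 0) (a := s₁) (b := s₂) hFc.continuousOn
      (fun x _ => (hFd x).hasDerivWithinAt)
      (by simp [hF1])
      (fun x hx => by
        simpa [Real.norm_eq_abs] using hbound x (hs₁.trans hx.1))
    have h2 := key s₂ ⟨h12, le_rfl⟩
    rw [gronwallBound_ε0_δ0] at h2
    have := norm_nonneg (F s₂)
    have h3 : ‖F s₂‖ = 0 := le_antisymm h2 this
    simpa using h3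
  -- the main decay estimate beyond z₀
  set L : ℝ := Real.log (F z₀ ^ 2) + (2 / (1 + lam)) * Real.log z₀
      + 8 * c / (1 + lam) ^ 2 + (4 / (1 + lam)) * (Ih + 1) with hLdef
  set A : ℝ := Real.exp L with hAdef
  have hA0 : 0 < A := Real.exp_pos _
  have hmain : ∀ z : ℝ, z₀ ≤ z → |F z| ≤ Real.sqrt A * z ^ (-(1 / (1 + lam))) := by
    intro z hz
    have hz1 : (1:ℝ) ≤ z := hz₀1.trans hz
    have hz0 : (0:ℝ) < z := lt_of_lt_of_le one_pos hz1
    by_cases hFz : F z = 0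
    · rw [hFz, abs_zero]
      positivity
    have hne : ∀ s ∈ Set.Icc z₀ z, F s ≠ 0 := by
      intro s hs hFs
      exact hFz (hzero s z hs.1 hs.2 hFs)
    have h0uIcc : (0:ℝ) ∉ Set.uIcc z₀ z := by
      rw [Set.uIcc_of_le hz]
      simp only [Set.mem_Icc, not_and]
      intro h'
      linarith
    -- FTC for the logarithmic derivative
    set q : ℝ → ℝ := fun s => 2 * deriv F s / F s with hqdef
    have hlogd : ∀ s ∈ Set.uIcc z₀ z,
        HasDerivAt (fun t => Real.log (F t ^ 2)) (q s) s := by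
      intro s hs
      rw [Set.uIcc_of_le hz] at hs
      have hFs := hne s hs
      have h1 : HasDerivAt (fun t => F t ^ 2) (2 * F s * deriv F s) s := by
        have := (hFd s).fun_pow 2
        simpa [mul_comm, mul_assoc, mul_left_comm] using this
      have h2 := h1.log (pow_ne_zero 2 hFs)
      convert h2 using 1
      rw [hqdef]
      field_simp
    have hqint : IntervalIntegrable q volume z₀ z := by
      apply ContinuousOn.intervalIntegrable
      rw [Set.uIcc_of_le hz]
      exact (continuousOn_const.mul hF'c.continuousOn).div hFc.continuousOn hne
    have hftc : (∫ s in z₀..z, q s) = Real.log (F z ^ 2) - Real.log (F z₀ ^ 2) :=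
      intervalIntegral.integral_eq_sub_of_hasDerivAt hlogd hqint
    -- the comparison function
    set R : ℝ → ℝ := fun s => (-2 / (1 + lam)) * s⁻¹
        + (4 * c / (1 + lam) ^ 2) * s ^ (-(3/2) : ℝ)
        + (4 / (1 + lam)) * (h s ^ 2 + s ^ (-(2:ℝ))) with hRdef
    have hcont1 : ContinuousOn (fun s : ℝ => (-2 / (1 + lam)) * s⁻¹) (Set.Icc z₀ z) := by
      refine continuousOn_const.mul (ContinuousOn.inv₀ continuousOn_id ?_)
      intro s hs
      have : (1:ℝ) ≤ s := hz₀1.trans hs.1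
      exact ne_of_gt (by linarith)
    have hcont2 : ContinuousOn
        (fun s : ℝ => (4 * c / (1 + lam) ^ 2) * s ^ (-(3/2) : ℝ)) (Set.Icc z₀ z) := by
      refine continuousOn_const.mul (ContinuousOn.rpow_const continuousOn_id ?_)
      intro s hs
      have : (1:ℝ) ≤ s := hz₀1.trans hs.1
      exact Or.inl (ne_of_gt (by linarith))
    have hcont3 : ContinuousOn (fun s : ℝ => s ^ (-(2:ℝ))) (Set.Icc z₀ z) := by
      refine ContinuousOn.rpow_const continuousOn_id ?_
      intro s hs
      have : (1:ℝ) ≤ s := hz₀1.trans hs.1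
      exact Or.inl (ne_of_gt (by linarith))
    have hint1 : IntervalIntegrable (fun s : ℝ => (-2 / (1 + lam)) * s⁻¹) volume z₀ z := by
      apply ContinuousOn.intervalIntegrable; rwa [Set.uIcc_of_le hz]
    have hint2 : IntervalIntegrable
        (fun s : ℝ => (4 * c / (1 + lam) ^ 2) * s ^ (-(3/2) : ℝ)) volume z₀ z := by
      apply ContinuousOn.intervalIntegrable; rwa [Set.uIcc_of_le hz]
    have hint2' : IntervalIntegrable (fun s : ℝ => s ^ (-(2:ℝ))) volume z₀ z := by
      apply ContinuousOn.intervalIntegrable; rwa [Set.uIcc_of_le hz]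
    have hint3 : IntervalIntegrable
        (fun s : ℝ => (4 / (1 + lam)) * (h s ^ 2 + s ^ (-(2:ℝ)))) volume z₀ z :=
      ((hIntsq z₀ z).add hint2').const_mul _
    have hRint : IntervalIntegrable R volume z₀ z := by
      rw [hRdef]
      exact (hint1.add hint2).add hint3
    -- pointwise comparison
    have hptwise : ∀ s ∈ Set.Icc z₀ z, q s ≤ R s := by
      intro s hs
      have hsz₀ : z₀ ≤ s := hs.1
      have hs1 : (1:ℝ) ≤ s := hz₀1.trans hsz₀
      have hs0 : (0:ℝ) < s := lt_of_lt_of_le one_pos hs1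
      have hFs : F s ≠ 0 := hne s hs
      have hDl := hD s hsz₀
      have hDp := hDpos s hsz₀
      have hHs := haH s hs0.le
      set d : ℝ := (1 + lam) * s - a * ∫ t in (0:ℝ)..s, h t with hddef
      have hd0 : d ≠ 0 := hDp.ne'
      have hqs : q s = (-2) * (1 + 2 * h s) / d := by
        rw [hqdef]
        simp only
        rw [hode s hsz₀]
        have hd0' : (1 + lam) * s - a * ∫ t in (0:ℝ)..s, h t ≠ 0 := hd0
        field_simp
        ring
      have hr0 : 0 < Real.sqrt s := Real.sqrt_pos.mpr hs0
      have hr2 : Real.sqrt s * Real.sqrt s = s := Real.mul_self_sqrt hs0.le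
      -- decompose
      have e1 : (-2) * (1 + 2 * h s) / d = -2 / d + (-4) * h s / d := by
        field_simp; ring
      have e2 : -2 / d = (-2 / (1 + lam)) * s⁻¹ + (-(2 * (a * ∫ t in (0:ℝ)..s, h t))) / (d * ((1 + lam) * s)) := by
        rw [hddef]
        have hd0' : (1 + lam) * s - a * ∫ t in (0:ℝ)..s, h t ≠ 0 := hd0
        field_simp
        ring
      have e3 : (-(2 * (a * ∫ t in (0:ℝ)..s, h t))) / (d * ((1 + lam) * s))
          ≤ (4 * c / (1 + lam) ^ 2) * s ^ (-(3/2) : ℝ) := by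
        have hnum : -(2 * (a * ∫ t in (0:ℝ)..s, h t)) ≤ 2 * (c * Real.sqrt s) := by
          have := neg_abs_le (a * ∫ t in (0:ℝ)..s, h t)
          linarith [hHs]
        have hbig : ((1 + lam) * s / 2) * ((1 + lam) * s) ≤ d * ((1 + lam) * s) :=
          mul_le_mul_of_nonneg_right hDl (by positivity)
        have hsmall : (0:ℝ) < ((1 + lam) * s / 2) * ((1 + lam) * s) := by positivity
        calc (-(2 * (a * ∫ t in (0:ℝ)..s, h t))) / (d * ((1 + lam) * s))
            ≤ (2 * (c * Real.sqrt s)) / (((1 + lam) * s / 2) * ((1 + lam) * s)) :=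
              div_le_div₀ (by positivity) hnum hsmall hbig
          _ = (4 * c / (1 + lam) ^ 2) * (Real.sqrt s / (s * s)) := by
              field_simp
              ring
          _ = (4 * c / (1 + lam) ^ 2) * s ^ (-(3/2) : ℝ) := by
              congr 1
              rw [Real.sqrt_eq_rpow]
              rw [show s * s = s ^ ((2:ℕ):ℝ) by rw [Real.rpow_natCast]; ring]
              rw [← Real.rpow_sub hs0]
              norm_num
      have e4 : (-4) * h s / d ≤ (4 / (1 + lam)) * (h s ^ 2 + s ^ (-(2:ℝ))) := by
        have h1 : (-4) * h s ≤ 4 * |h s| := by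
          have := neg_abs_le (h s)
          linarith
        have hDl2 : (1 + lam) * s / 2 ≤ d := hDl
        have h23 : (-4) * h s / d ≤ 4 * |h s| / ((1 + lam) * s / 2) :=
          div_le_div₀ (by positivity) h1 (by positivity) hDl2
        have h4 : 4 * |h s| / ((1 + lam) * s / 2) = (4 / (1 + lam)) * (2 * |h s| / s) := by
          field_simp
        have h5 : 2 * |h s| / s ≤ h s ^ 2 + s ^ (-(2:ℝ)) := by
          have hs2 : s ^ (-(2:ℝ)) = 1 / (s * s) := by
            rw [Real.rpow_neg hs0.le, one_div]
            congr 1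
            rw [show ((2:ℝ)) = ((2:ℕ):ℝ) by norm_num, Real.rpow_natCast]
            ring
          rw [hs2, ← sq_abs (h s)]
          have e : |h s| ^ 2 + 1 / (s * s) - 2 * |h s| / s = (|h s| - 1 / s) ^ 2 := by
            field_simp
            ring
          linarith [sq_nonneg (|h s| - 1 / s), e]
        calc (-4) * h s / d ≤ 4 * |h s| / ((1 + lam) * s / 2) := h23
          _ = (4 / (1 + lam)) * (2 * |h s| / s) := h4
          _ ≤ (4 / (1 + lam)) * (h s ^ 2 + s ^ (-(2:ℝ))) := by
              apply mul_le_mul_of_nonneg_left h5 (by positivity)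
      rw [hqs, hRdef]
      simp only
      linarith [e1, e2, e3, e4]
    have hmono := intervalIntegral.integral_mono_on hz hqint hRint hptwise
    -- evaluate / bound the integral of R
    have hIR : (∫ s in z₀..z, R s)
        ≤ (-2 / (1 + lam)) * (Real.log z - Real.log z₀)
          + 8 * c / (1 + lam) ^ 2 + (4 / (1 + lam)) * (Ih + 1) := by
      have split : (∫ s in z₀..z, R s)
          = (∫ s in z₀..z, (-2 / (1 + lam)) * s⁻¹)
            + (∫ s in z₀..z, (4 * c / (1 + lam) ^ 2) * s ^ (-(3/2) : ℝ))
            + (∫ s in z₀..z, (4 / (1 + lam)) * (h s ^ 2 + s ^ (-(2:ℝ)))) := by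
        rw [hRdef]
        rw [intervalIntegral.integral_add (hint1.add hint2) hint3,
          intervalIntegral.integral_add hint1 hint2]
      have val1 : (∫ s in z₀..z, (-2 / (1 + lam)) * s⁻¹)
          = (-2 / (1 + lam)) * (Real.log z - Real.log z₀) := by
        rw [intervalIntegral.integral_const_mul, integral_inv h0uIcc,
          Real.log_div (by positivity) (by positivity)]
      have val2 : (∫ s in z₀..z, (4 * c / (1 + lam) ^ 2) * s ^ (-(3/2) : ℝ))
          ≤ 8 * c / (1 + lam) ^ 2 := by
        have hzp : (0:ℝ) < z ^ (-(3/2) + 1 : ℝ) := Real.rpow_pos_of_pos hz0 _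
        have hz₀p : z₀ ^ (-(3/2) + 1 : ℝ) ≤ 1 :=
          Real.rpow_le_one_of_one_le_of_nonpos hz₀1 (by norm_num)
        have hb2 : (z ^ (-(3/2) + 1 : ℝ) - z₀ ^ (-(3/2) + 1 : ℝ)) / (-(3/2) + 1)
            ≤ 2 := by
          rw [div_le_iff_of_neg (by norm_num : (-(3/2) + 1 : ℝ) < 0)]
          linarith [hzp, hz₀p]
        calc (∫ s in z₀..z, (4 * c / (1 + lam) ^ 2) * s ^ (-(3/2) : ℝ))
            = (4 * c / (1 + lam) ^ 2)
              * ((z ^ (-(3/2) + 1 : ℝ) - z₀ ^ (-(3/2) + 1 : ℝ)) / (-(3/2) + 1)) := by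
              rw [intervalIntegral.integral_const_mul,
                integral_rpow (Or.inr ⟨by norm_num, h0uIcc⟩)]
          _ ≤ (4 * c / (1 + lam) ^ 2) * 2 :=
              mul_le_mul_of_nonneg_left hb2 (by positivity)
          _ = 8 * c / (1 + lam) ^ 2 := by ring
      have val3 : (∫ s in z₀..z, (4 / (1 + lam)) * (h s ^ 2 + s ^ (-(2:ℝ))))
          ≤ (4 / (1 + lam)) * (Ih + 1) := by
        rw [intervalIntegral.integral_const_mul]
        apply mul_le_mul_of_nonneg_left _ (by positivity)
        rw [intervalIntegral.integral_add (hIntsq z₀ z) hint2']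
        have v1 : (∫ s in z₀..z, h s ^ 2) ≤ Ih := hsqle z₀ z hz
        have v2 : (∫ s in z₀..z, s ^ (-(2:ℝ))) ≤ 1 := by
          rw [integral_rpow (Or.inr ⟨by norm_num, h0uIcc⟩)]
          have hzp : (0:ℝ) < z ^ (-(2:ℝ) + 1) := Real.rpow_pos_of_pos hz0 _
          have hz₀p : z₀ ^ (-(2:ℝ) + 1) ≤ 1 :=
            Real.rpow_le_one_of_one_le_of_nonpos hz₀1 (by norm_num)
          rw [div_le_iff_of_neg (by norm_num : (-(2:ℝ) + 1) < 0)]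
          linarith [hzp, hz₀p]
        linarith
      linarith [split, val1, val2, val3]
    -- conclude the logarithmic bound
    have hlog : Real.log (F z ^ 2) ≤ L + (-(2 / (1 + lam))) * Real.log z := by
      have h8 := le_trans hmono hIR
      rw [hftc] at h8
      have h9 : -2 / (1 + lam) * (Real.log z - Real.log z₀)
          = 2 / (1 + lam) * Real.log z₀ + -(2 / (1 + lam)) * Real.log z := by ring
      rw [h9] at h8
      rw [hLdef]
      linarith
    have hu : (0:ℝ) < F z ^ 2 :=
      lt_of_le_of_ne (sq_nonneg _) (Ne.symm (pow_ne_zero 2 hFz))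
    have h5 : F z ^ 2 ≤ A * z ^ (-(2 / (1 + lam))) := by
      calc F z ^ 2 = Real.exp (Real.log (F z ^ 2)) := (Real.exp_log hu).symm
        _ ≤ Real.exp (L + (-(2 / (1 + lam))) * Real.log z) := Real.exp_le_exp.mpr hlog
        _ = A * z ^ (-(2 / (1 + lam))) := by
            rw [Real.exp_add, hAdef]
            congr 1
            rw [Real.rpow_def_of_pos hz0, mul_comm]
    have h6 : |F z| = Real.sqrt (F z ^ 2) := (Real.sqrt_sq_eq_abs _).symm
    have h7 : Real.sqrt (A * z ^ (-(2 / (1 + lam))))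
        = Real.sqrt A * z ^ (-(1 / (1 + lam))) := by
      rw [Real.sqrt_mul hA0.le]
      congr 1
      rw [show (-(2 / (1 + lam))) = (-(1 / (1 + lam))) * ((2:ℕ):ℝ) by push_cast; ring,
        Real.rpow_mul hz0.le, Real.rpow_natCast,
        Real.sqrt_sq (Real.rpow_nonneg hz0.le _)]
    rw [h6, ← h7]
    exact Real.sqrt_le_sqrt h5
  -- assemble the final constant
  refine ⟨Real.sqrt A + M * z₀ ^ ((1:ℝ) / (1 + lam)) + 1, by positivity, ?_⟩
  have key : ∀ t : ℝ, 1 ≤ t →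
      |F t| ≤ (Real.sqrt A + M * z₀ ^ ((1:ℝ) / (1 + lam)) + 1) * t ^ (-(1 / (1 + lam))) := by
    intro t ht
    have ht0 : (0:ℝ) < t := lt_of_lt_of_le one_pos ht
    have htp : (0:ℝ) ≤ t ^ (-(1 / (1 + lam))) := Real.rpow_nonneg ht0.le _
    have hsA : (0:ℝ) ≤ Real.sqrt A := Real.sqrt_nonneg _
    have hMz : (0:ℝ) ≤ M * z₀ ^ ((1:ℝ) / (1 + lam)) := by positivity
    rcases le_total t z₀ with hcase | hcase
    · have hexp : -(1 / (1 + lam)) ≤ 0 := by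
        have h' : (0:ℝ) < 1 / (1 + lam) := by positivity
        linarith
      have h1 : z₀ ^ (-(1 / (1 + lam))) ≤ t ^ (-(1 / (1 + lam))) :=
        Real.rpow_le_rpow_of_nonpos ht0 hcase hexp
      have h2 : M * z₀ ^ ((1:ℝ) / (1 + lam)) * z₀ ^ (-(1 / (1 + lam))) = M := by
        rw [mul_assoc, ← Real.rpow_add hz₀pos]
        norm_num
      have h3 : M * z₀ ^ ((1:ℝ) / (1 + lam)) * z₀ ^ (-(1 / (1 + lam)))
          ≤ M * z₀ ^ ((1:ℝ) / (1 + lam)) * t ^ (-(1 / (1 + lam))) :=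
        mul_le_mul_of_nonneg_left h1 hMz
      calc |F t| ≤ M := hM t
        _ = M * z₀ ^ ((1:ℝ) / (1 + lam)) * z₀ ^ (-(1 / (1 + lam))) := h2.symm
        _ ≤ M * z₀ ^ ((1:ℝ) / (1 + lam)) * t ^ (-(1 / (1 + lam))) := h3
        _ ≤ (Real.sqrt A + M * z₀ ^ ((1:ℝ) / (1 + lam)) + 1) * t ^ (-(1 / (1 + lam))) := by
            have := mul_nonneg hsA htp
            nlinarith [htp, this]
    · calc |F t| ≤ Real.sqrt A * t ^ (-(1 / (1 + lam))) := hmain t hcase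
        _ ≤ (Real.sqrt A + M * z₀ ^ ((1:ℝ) / (1 + lam)) + 1) * t ^ (-(1 / (1 + lam))) := by
            have := mul_nonneg hMz htp
            nlinarith [htp, this]
  intro z hz
  rcases le_or_gt 0 z with hz0 | hz0
  · have habs : |z| = z := abs_of_nonneg hz0
    rw [habs] at hz ⊢
    exact key z hz
  · have habs : |z| = -z := abs_of_neg hz0
    rw [habs] at hz ⊢
    have hodd : |F (-z)| = |F z| := by rw [hFodd z, abs_neg]
    rw [← hodd]
    exact key (-z) hz
end

section
/- For every x ∈ ℝ, lim_{ε → 0⁺} (1/π) ∫_{{y : |x − y| > ε}} (y/(1+y²))/(x − y) dy = −1/(1+x²). That is, the (principal-value) Hilbert transform of the function ω₀(y) = y/(1+y²) is Hω₀(x) = −1/(1+x²). -/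
open MeasureTheory Filter

open Set Real

lemma ratio_eq (x y : ℝ) (hy : y ≠ 0) :
    (1 + y ^ 2) / (y - x) ^ 2 = ((y⁻¹) ^ 2 + 1) / ((1 - x * y⁻¹) ^ 2) := by
  have h : (1 - x * y⁻¹) = (y - x) * y⁻¹ := by field_simp
  rw [h, mul_pow]
  field_simp

lemma tendsto_ratio_atTop (x : ℝ) :
    Tendsto (fun y : ℝ => (1 + y ^ 2) / (y - x) ^ 2) atTop (nhds 1) := by
  have h0 : Tendsto (fun y : ℝ => y⁻¹) atTop (nhds 0) := tendsto_inv_atTop_zero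
  have hnum : Tendsto (fun y : ℝ => (y⁻¹) ^ 2 + 1) atTop (nhds 1) := by
    simpa using (h0.pow 2).add (tendsto_const_nhds (x := (1:ℝ)))
  have hden : Tendsto (fun y : ℝ => (1 - x * y⁻¹) ^ 2) atTop (nhds 1) := by
    simpa using ((tendsto_const_nhds (x := (1:ℝ))).sub (tendsto_const_nhds.mul h0)).pow 2
  have := hnum.div hden one_ne_zero
  simp only [div_one] at this
  refine this.congr' ?_
  filter_upwards [eventually_gt_atTop (0:ℝ)] with y hy
  exact (ratio_eq x y hy.ne').symm

lemma tendsto_ratio_atBot (x : ℝ) :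
    Tendsto (fun y : ℝ => (1 + y ^ 2) / (y - x) ^ 2) atBot (nhds 1) := by
  have h0 : Tendsto (fun y : ℝ => y⁻¹) atBot (nhds 0) := by
    have := (tendsto_inv_atTop_zero.comp tendsto_neg_atBot_atTop (α := ℝ)).neg
    simpa [inv_neg] using this
  have hnum : Tendsto (fun y : ℝ => (y⁻¹) ^ 2 + 1) atBot (nhds 1) := by
    simpa using (h0.pow 2).add (tendsto_const_nhds (x := (1:ℝ)))
  have hden : Tendsto (fun y : ℝ => (1 - x * y⁻¹) ^ 2) atBot (nhds 1) := by
    simpa using ((tendsto_const_nhds (x := (1:ℝ))).sub (tendsto_const_nhds.mul h0)).pow 2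
  have := hnum.div hden one_ne_zero
  simp only [div_one] at this
  refine this.congr' ?_
  filter_upwards [eventually_lt_atBot (0:ℝ)] with y hy
  exact (ratio_eq x y hy.ne).symm

lemma F_eq (x y : ℝ) (hy : y ≠ x) :
    (1/2) * Real.log (1 + y ^ 2) - Real.log (y - x)
      = (1/2) * Real.log ((1 + y ^ 2) / (y - x) ^ 2) := by
  rw [Real.log_div (by positivity) (pow_ne_zero _ (sub_ne_zero.mpr hy)), Real.log_pow]
  push_cast
  ring

lemma tendsto_F_atTop (x : ℝ) :
    Tendsto (fun y : ℝ => (1/2) * Real.log (1 + y ^ 2) - Real.log (y - x)) atTop (nhds 0) := by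
  have h := ((Real.continuousAt_log one_ne_zero).tendsto.comp (tendsto_ratio_atTop x)).const_mul (1/2 : ℝ)
  rw [Real.log_one, mul_zero] at h
  refine h.congr' ?_
  filter_upwards [eventually_gt_atTop x] with y hy
  exact (F_eq x y hy.ne').symm

lemma tendsto_F_atBot (x : ℝ) :
    Tendsto (fun y : ℝ => (1/2) * Real.log (1 + y ^ 2) - Real.log (y - x)) atBot (nhds 0) := by
  have h := ((Real.continuousAt_log one_ne_zero).tendsto.comp (tendsto_ratio_atBot x)).const_mul (1/2 : ℝ)
  rw [Real.log_one, mul_zero] at h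
  refine h.congr' ?_
  filter_upwards [eventually_lt_atBot x] with y hy
  exact (F_eq x y hy.ne).symm

lemma hasDerivAt_F (x y : ℝ) (hy : y ≠ x) :
    HasDerivAt (fun t : ℝ => (1/2) * Real.log (1 + t ^ 2) - Real.log (t - x))
      ((1 + x * y) / ((1 + y ^ 2) * (x - y))) y := by
  have h1 : HasDerivAt (fun t : ℝ => 1 + t ^ 2) (2 * y) y := by
    simpa using ((hasDerivAt_pow 2 y).const_add 1)
  have h2 := (Real.hasDerivAt_log (by positivity : (1:ℝ) + y ^ 2 ≠ 0)).comp y h1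
  have h3 : HasDerivAt (fun t : ℝ => t - x) 1 y := (hasDerivAt_id y).sub_const x
  have h4 := (Real.hasDerivAt_log (sub_ne_zero.mpr hy)).comp y h3
  have h5 := (h2.const_mul (1/2 : ℝ)).sub h4
  refine h5.congr_deriv ?_
  have hxy : x - y ≠ 0 := sub_ne_zero.mpr (Ne.symm hy)
  have hyx : y - x ≠ 0 := sub_ne_zero.mpr hy
  have h6 : (1:ℝ) + y ^ 2 ≠ 0 := by positivity
  field_simp
  ring

lemma integrableOn_bound {S : Set ℝ} {g : ℝ → ℝ}
    (hg : AEStronglyMeasurable g (volume.restrict S)) (hS : MeasurableSet S)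
    (C : ℝ) (hb : ∀ y ∈ S, |g y| ≤ C * (1 + y ^ 2)⁻¹) : IntegrableOn g S := by
  refine Integrable.mono ((integrable_inv_one_add_sq.const_mul C).integrableOn) hg ?_
  refine (ae_restrict_iff' hS).mpr (ae_of_all _ fun y hy => ?_)
  calc ‖g y‖ = |g y| := rfl
  _ ≤ C * (1 + y ^ 2)⁻¹ := hb y hy
  _ ≤ ‖C * (1 + y ^ 2)⁻¹‖ := le_abs_self _

lemma S_meas (x ε : ℝ) : MeasurableSet {y : ℝ | ε < |x - y|} :=
  (isOpen_lt continuous_const (continuous_const.sub continuous_id).abs).measurableSet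

lemma g_bound (x ε : ℝ) (hε : 0 < ε) :
    ∀ y ∈ {y : ℝ | ε < |x - y|},
      |y / (1 + y ^ 2) / (x - y)| ≤ (1 + |x| / ε) * (1 + y ^ 2)⁻¹ := by
  intro y hy
  have h1 : ε < |x - y| := hy
  have h2 : (0:ℝ) < 1 + y ^ 2 := by positivity
  have h3 : |y| ≤ |x - y| + |x| := by
    have := abs_sub_abs_le_abs_sub y x
    have h4 : |y - x| = |x - y| := abs_sub_comm y x
    linarith
  have hxy : (0:ℝ) < |x - y| := hε.trans h1
  have hx0 : (0:ℝ) ≤ |x| := abs_nonneg x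
  have hC : (1 + |x| / ε) = (ε + |x|) / ε := by field_simp
  rw [abs_div, abs_div, abs_of_pos h2, div_div, ← div_eq_mul_inv, hC,
    div_le_div_iff₀ (mul_pos h2 hxy) h2, div_mul_eq_mul_div, le_div_iff₀ hε]
  have key : |y| * ε ≤ (ε + |x|) * |x - y| := by nlinarith
  nlinarith [mul_le_mul_of_nonneg_right key h2.le]

lemma h_bound (x ε : ℝ) (hε : 0 < ε) :
    ∀ y ∈ {y : ℝ | ε < |x - y|},
      |(1 + x * y) / ((1 + y ^ 2) * (x - y))| ≤ ((1 + x ^ 2) / ε + |x|) * (1 + y ^ 2)⁻¹ := by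
  intro y hy
  have h1 : ε < |x - y| := hy
  have h2 : (0:ℝ) < 1 + y ^ 2 := by positivity
  have h3 : |y| ≤ |x - y| + |x| := by
    have := abs_sub_abs_le_abs_sub y x
    have h4 : |y - x| = |x - y| := abs_sub_comm y x
    linarith
  have h5 : |1 + x * y| ≤ 1 + |x| * |y| := by
    calc |1 + x * y| ≤ |1| + |x * y| := abs_add_le _ _
    _ = 1 + |x| * |y| := by rw [abs_one, abs_mul]
  have hxy : (0:ℝ) < |x - y| := hε.trans h1
  have hx0 : (0:ℝ) ≤ |x| := abs_nonneg x
  have hx2 : x ^ 2 = |x| * |x| := by rw [abs_mul_abs_self]; ring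
  have hC : ((1 + x ^ 2) / ε + |x|) = ((1 + x ^ 2) + |x| * ε) / ε := by field_simp
  rw [abs_div, abs_mul, abs_of_pos h2, ← div_eq_mul_inv, hC,
    div_le_div_iff₀ (mul_pos h2 hxy) h2, div_mul_eq_mul_div, le_div_iff₀ hε]
  have key : |1 + x * y| * ε ≤ ((1 + x ^ 2) + |x| * ε) * |x - y| := by
    nlinarith [mul_le_mul_of_nonneg_right h5 hε.le,
      mul_le_mul_of_nonneg_right (mul_le_mul_of_nonneg_left h3 hx0) hε.le,
      mul_le_mul_of_nonneg_right h1.le (by positivity : (0:ℝ) ≤ 1 + x ^ 2)]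
  nlinarith [mul_le_mul_of_nonneg_right key h2.le]

lemma hS_split (x ε : ℝ) :
    {y : ℝ | ε < |x - y|} = Iio (x - ε) ∪ Ioi (x + ε) := by
  ext y
  simp only [mem_setOf_eq, mem_union, mem_Iio, mem_Ioi, lt_abs]
  constructor
  · rintro (h | h)
    · left; linarith
    · right; linarith
  · rintro (h | h)
    · left; linarith
    · right; linarith

lemma g_meas (x : ℝ) (μ : Measure ℝ) :
    AEStronglyMeasurable (fun y : ℝ => y / (1 + y ^ 2) / (x - y)) μ :=
  ((measurable_id.div ((measurable_const.add (measurable_id.pow_const 2)))).div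
    (measurable_const.sub measurable_id)).aestronglyMeasurable

lemma h_meas (x : ℝ) (μ : Measure ℝ) :
    AEStronglyMeasurable (fun y : ℝ => (1 + x * y) / ((1 + y ^ 2) * (x - y))) μ :=
  ((measurable_const.add (measurable_const.mul measurable_id)).div
    ((measurable_const.add (measurable_id.pow_const 2)).mul
      (measurable_const.sub measurable_id))).aestronglyMeasurable

lemma g_int (x ε : ℝ) (hε : 0 < ε) :
    IntegrableOn (fun y : ℝ => y / (1 + y ^ 2) / (x - y)) {y : ℝ | ε < |x - y|} :=
  integrableOn_bound (g_meas x _) (S_meas x ε) _ (g_bound x ε hε)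

lemma h_int (x ε : ℝ) (hε : 0 < ε) :
    IntegrableOn (fun y : ℝ => (1 + x * y) / ((1 + y ^ 2) * (x - y))) {y : ℝ | ε < |x - y|} :=
  integrableOn_bound (h_meas x _) (S_meas x ε) _ (h_bound x ε hε)

lemma Ioi_subset_S (x ε : ℝ) (hε : 0 < ε) : Ioi (x + ε) ⊆ {y : ℝ | ε < |x - y|} := by
  intro y hy
  have h : x + ε < y := hy
  simp only [mem_setOf_eq]
  rw [show |x - y| = -(x - y) from abs_of_neg (by linarith)]
  linarith

lemma Iio_subset_S (x ε : ℝ) (hε : 0 < ε) : Iio (x - ε) ⊆ {y : ℝ | ε < |x - y|} := by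
  intro y hy
  have h : y < x - ε := hy
  simp only [mem_setOf_eq]
  rw [show |x - y| = x - y from abs_of_pos (by linarith)]
  linarith

lemma h_integral_Ioi (x ε : ℝ) (hε : 0 < ε) :
    ∫ y in Ioi (x + ε), (1 + x * y) / ((1 + y ^ 2) * (x - y))
      = Real.log ε - (1/2) * Real.log (1 + (x + ε) ^ 2) := by
  have hint := (h_int x ε hε).mono_set (Ioi_subset_S x ε hε)
  rw [integral_Ioi_of_hasDerivAt_of_tendsto'
      (fun y hy => hasDerivAt_F x y (lt_of_lt_of_le (lt_add_of_pos_right x hε) hy).ne')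
      hint (tendsto_F_atTop x)]
  rw [show x + ε - x = ε by ring]
  ring

lemma h_integral_Iio (x ε : ℝ) (hε : 0 < ε) :
    ∫ y in Iio (x - ε), (1 + x * y) / ((1 + y ^ 2) * (x - y))
      = (1/2) * Real.log (1 + (x - ε) ^ 2) - Real.log ε := by
  rw [← integral_Iic_eq_integral_Iio]
  have hint : IntegrableOn (fun y : ℝ => (1 + x * y) / ((1 + y ^ 2) * (x - y))) (Iic (x - ε)) :=
    ((h_int x ε hε).mono_set (Iio_subset_S x ε hε)).congr_set_ae Iio_ae_eq_Iic.symm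
  rw [integral_Iic_of_hasDerivAt_of_tendsto'
      (fun y hy => hasDerivAt_F x y (lt_of_le_of_lt hy (by linarith)).ne)
      hint (tendsto_F_atBot x)]
  rw [show x - ε - x = -ε by ring, Real.log_neg_eq_log]
  ring

lemma main_formula (x ε : ℝ) (hε : 0 < ε) :
    ∫ y in {y : ℝ | ε < |x - y|}, y / (1 + y ^ 2) / (x - y)
      = x / (1 + x ^ 2) *
          ((1/2) * Real.log (1 + (x - ε) ^ 2) - (1/2) * Real.log (1 + (x + ε) ^ 2))
        + (-1 / (1 + x ^ 2)) *
          (Real.pi - (Real.arctan (x + ε) - Real.arctan (x - ε))) := by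
  have hx2 : (0:ℝ) < 1 + x ^ 2 := by positivity
  have hdecomp : ∀ y ∈ {y : ℝ | ε < |x - y|},
      y / (1 + y ^ 2) / (x - y)
        = x / (1 + x ^ 2) * ((1 + x * y) / ((1 + y ^ 2) * (x - y)))
          + (-1 / (1 + x ^ 2)) * (1 + y ^ 2)⁻¹ := by
    intro y hy
    have h1 : ε < |x - y| := hy
    have hxy : x - y ≠ 0 := by
      intro h; rw [h, abs_zero] at h1; linarith
    have hy2 : (1:ℝ) + y ^ 2 ≠ 0 := by positivity
    field_simp
    ring
  rw [setIntegral_congr_fun (S_meas x ε) hdecomp]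
  rw [integral_add ((((h_int x ε hε).const_mul _)))
      (((integrable_inv_one_add_sq.integrableOn).const_mul _)),
    integral_const_mul, integral_const_mul]
  have e1 : ∫ y in {y : ℝ | ε < |x - y|}, (1 + x * y) / ((1 + y ^ 2) * (x - y))
      = (1/2) * Real.log (1 + (x - ε) ^ 2) - (1/2) * Real.log (1 + (x + ε) ^ 2) := by
    rw [hS_split x ε, setIntegral_union (by simp only [disjoint_left, mem_Iio, mem_Ioi, not_lt]; intro a h1; linarith)
        measurableSet_Ioi ((h_int x ε hε).mono_set (Iio_subset_S x ε hε))
        ((h_int x ε hε).mono_set (Ioi_subset_S x ε hε)),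
      h_integral_Ioi x ε hε, h_integral_Iio x ε hε]
    ring
  have e2 : ∫ y in {y : ℝ | ε < |x - y|}, (1 + y ^ 2)⁻¹
      = Real.pi - (Real.arctan (x + ε) - Real.arctan (x - ε)) := by
    rw [hS_split x ε, setIntegral_union (by simp only [disjoint_left, mem_Iio, mem_Ioi, not_lt]; intro a h1; linarith)
        measurableSet_Ioi (integrable_inv_one_add_sq.integrableOn)
        (integrable_inv_one_add_sq.integrableOn),
      ← integral_Iic_eq_integral_Iio, integral_Iic_inv_one_add_sq, integral_Ioi_inv_one_add_sq]
    ring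
  rw [e1, e2]

open Real in
theorem hilbert_of_CLM_profile' (x : ℝ) :
    Tendsto
      (fun ε : ℝ => (Real.pi)⁻¹ * ∫ y in {y : ℝ | ε < |x - y|}, (y / (1 + y ^ 2)) / (x - y))
      (nhdsWithin 0 (Set.Ioi 0)) (nhds (-1 / (1 + x ^ 2))) := by
  have hx2 : (0:ℝ) < 1 + x ^ 2 := by positivity
  set Φ : ℝ → ℝ := fun ε => (Real.pi)⁻¹ *
    (x / (1 + x ^ 2) *
        ((1/2) * Real.log (1 + (x - ε) ^ 2) - (1/2) * Real.log (1 + (x + ε) ^ 2))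
      + (-1 / (1 + x ^ 2)) * (Real.pi - (Real.arctan (x + ε) - Real.arctan (x - ε)))) with hΦ
  have hlog1 : ContinuousAt (fun ε : ℝ => Real.log (1 + (x - ε) ^ 2)) 0 :=
    (Real.continuousAt_log (by positivity)).comp (by fun_prop)
  have hlog2 : ContinuousAt (fun ε : ℝ => Real.log (1 + (x + ε) ^ 2)) 0 :=
    (Real.continuousAt_log (by positivity)).comp (by fun_prop)
  have hcont : ContinuousAt Φ 0 := by
    apply continuousAt_const.mul
    apply ContinuousAt.add
    · exact continuousAt_const.mul ((continuousAt_const.mul hlog1).sub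
        (continuousAt_const.mul hlog2))
    · exact continuousAt_const.mul (continuousAt_const.sub
        (((Real.continuous_arctan.comp (continuous_const.add continuous_id)).continuousAt).sub
          ((Real.continuous_arctan.comp (continuous_const.sub continuous_id)).continuousAt)))
  have hΦ0 : Φ 0 = -1 / (1 + x ^ 2) := by
    rw [hΦ]
    simp only [sub_zero, add_zero, sub_self, mul_zero, zero_add]
    field_simp
  have hT : Tendsto Φ (nhdsWithin 0 (Set.Ioi 0)) (nhds (-1 / (1 + x ^ 2))) := by
    have h := hcont.tendsto
    rw [hΦ0] at h
    exact h.mono_left nhdsWithin_le_nhds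
  refine hT.congr' ?_
  filter_upwards [self_mem_nhdsWithin] with ε hε
  rw [main_formula x ε hε]

/-- The Hilbert transform of `y ↦ y/(1+y²)` is `x ↦ -1/(1+x²)`. -/
theorem hilbert_of_CLM_profile :
    IsPVHilbert (fun y : ℝ => y / (1 + y ^ 2)) (fun x : ℝ => -1 / (1 + x ^ 2)) := fun x =>
  hilbert_of_CLM_profile' x
end

section
/- Define, for 0 ≤ t < 1 and x ∈ ℝ, ω(t,x) = (1/(1−t))·(x/(1−t))/(1 + (x/(1−t))²) and h(t,x) = −(1/(1−t))·1/(1 + (x/(1−t))²). Then: (i) for each fixed t ∈ [0,1), the function x ↦ h(t,x) is the (principal-value) Hilbert transform of x ↦ ω(t,x); and (ii) for all (t,x) ∈ [0,1) × ℝ, ∂ₜω(t,x) + 2·h(t,x)·ω(t,x) = 0. Hence ω is a self-similar solution of the Constantin–Lax–Majda equation ∂ₜω + 2H(ω)ω = 0 with initial data ω₀(x) = x/(1+x²), blowing up at t = 1. -/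
open MeasureTheory Filter

section Aux
open Real Set

lemma G_deriv (a A B : ℝ) (ha : 0 < a) (y : ℝ) :
    HasDerivAt (fun y : ℝ => A/2 * Real.log (a^2+y^2) + (B/a) * Real.arctan (y/a))
      ((A*y+B)/(a^2+y^2)) y := by
  have hpos : (0:ℝ) < a^2 + y^2 := by positivity
  have h1 : HasDerivAt (fun y : ℝ => a^2 + y^2) (2*y) y := by
    simpa using ((hasDerivAt_pow 2 y).const_add (a^2))
  have h2 : HasDerivAt (fun y : ℝ => Real.log (a^2+y^2)) ((2*y)/(a^2+y^2)) y :=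
    h1.log hpos.ne'
  have h3 : HasDerivAt (fun y : ℝ => Real.arctan (y/a)) ((1/(1+(y/a)^2))*(1/a)) y := by
    have := (Real.hasDerivAt_arctan (y/a)).comp y ((hasDerivAt_id y).div_const a)
    simpa [Function.comp_def] using this
  have := (h2.const_mul (A/2)).add (h3.const_mul (B/a))
  refine this.congr_deriv ?_
  have h1a : (1 + (y/a)^2) ≠ 0 := by positivity
  field_simp

lemma hilbert_poisson (a x : ℝ) (ha : 0 < a) :
    Tendsto (fun ε : ℝ => (Real.pi)⁻¹ * ∫ y in {y : ℝ | ε < |x - y|}, (y / (a^2 + y^2)) / (x - y))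
      (nhdsWithin 0 (Set.Ioi 0)) (nhds (-(a / (a^2 + x^2)))) := by
  have hD : (0:ℝ) < a^2 + x^2 := by positivity
  set A : ℝ := x / (a^2 + x^2) with hA
  set B : ℝ := -(a^2) / (a^2 + x^2) with hB
  set G : ℝ → ℝ := fun y => A/2 * Real.log (a^2+y^2) + (B/a) * Real.arctan (y/a) with hG
  set g : ℝ → ℝ := fun y => (y / (a^2 + y^2)) / (x - y) with hg
  set F₁ : ℝ → ℝ := fun y => G y - A * Real.log (x - y) with hF₁
  set F₂ : ℝ → ℝ := fun y => G y - A * Real.log (y - x) with hF₂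
  -- derivatives
  have hdF₁ : ∀ y, y < x → HasDerivAt F₁ (g y) y := by
    intro y hy
    have hxy : x - y ≠ 0 := sub_ne_zero.mpr (ne_of_lt hy).symm
    have hpos : (0:ℝ) < a^2 + y^2 := by positivity
    have h1 : HasDerivAt (fun y : ℝ => x - y) (-1) y := by
      simpa using (hasDerivAt_id y).const_sub x
    have h2 : HasDerivAt (fun y : ℝ => Real.log (x - y)) ((-1)/(x-y)) y := h1.log hxy
    have key := (G_deriv a A B ha y).sub (h2.const_mul A)
    have hkey : (A*y+B)/(a^2+y^2) - A * ((-1)/(x-y)) = g y := by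
      simp only [hg, hA, hB]
      field_simp
      ring
    exact hkey ▸ key
  have hdF₂ : ∀ y, x < y → HasDerivAt F₂ (g y) y := by
    intro y hy
    have hxy : y - x ≠ 0 := sub_ne_zero.mpr (ne_of_gt hy)
    have hxy' : x - y ≠ 0 := sub_ne_zero.mpr (ne_of_gt hy).symm
    have hpos : (0:ℝ) < a^2 + y^2 := by positivity
    have h1 : HasDerivAt (fun y : ℝ => y - x) 1 y := by
      simpa using (hasDerivAt_id y).sub_const x
    have h2 : HasDerivAt (fun y : ℝ => Real.log (y - x)) (1/(y-x)) y := by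
      simpa using h1.log hxy
    have key := (G_deriv a A B ha y).sub (h2.const_mul A)
    have hkey : (A*y+B)/(a^2+y^2) - A * (1/(y-x)) = g y := by
      simp only [hg, hA, hB]
      field_simp
      ring
    exact hkey ▸ key
  -- limits at infinity
  have harctanBot : Tendsto (fun y : ℝ => (B/a) * Real.arctan (y/a)) atBot
      (nhds ((B/a) * (-(Real.pi/2)))) := by
    have h1 : Tendsto (fun y : ℝ => y / a) atBot atBot := tendsto_id.atBot_div_const ha
    have := ((tendsto_nhds_of_tendsto_nhdsWithin Real.tendsto_arctan_atBot).comp h1).const_mul (B/a)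
    simpa [Function.comp] using this
  have harctanTop : Tendsto (fun y : ℝ => (B/a) * Real.arctan (y/a)) atTop
      (nhds ((B/a) * (Real.pi/2))) := by
    have h1 : Tendsto (fun y : ℝ => y / a) atTop atTop := tendsto_id.atTop_div_const ha
    have := ((tendsto_nhds_of_tendsto_nhdsWithin Real.tendsto_arctan_atTop).comp h1).const_mul (B/a)
    simpa [Function.comp] using this
  -- ratio limits
  have hinvBot : Tendsto (fun y : ℝ => y⁻¹) atBot (nhds 0) := by
    have h := (tendsto_inv_atTop_zero.comp (tendsto_neg_atBot_atTop : Tendsto (fun y : ℝ => -y) atBot atTop)).neg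
    rw [neg_zero] at h
    refine h.congr fun y => ?_
    simp [Function.comp, inv_neg]
  have hinvTop : Tendsto (fun y : ℝ => y⁻¹) atTop (nhds (0:ℝ)) := tendsto_inv_atTop_zero
  have hxoverBot : Tendsto (fun y : ℝ => x / y) atBot (nhds 0) := by
    have := hinvBot.const_mul x
    rw [mul_zero] at this
    exact this.congr fun y => (div_eq_mul_inv x y).symm
  have haoverBot : Tendsto (fun y : ℝ => a / y) atBot (nhds 0) := by
    have := hinvBot.const_mul a
    rw [mul_zero] at this
    exact this.congr fun y => (div_eq_mul_inv a y).symm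
  have hxoverTop : Tendsto (fun y : ℝ => x / y) atTop (nhds 0) := by
    have := hinvTop.const_mul x
    rw [mul_zero] at this
    exact this.congr fun y => (div_eq_mul_inv x y).symm
  have haoverTop : Tendsto (fun y : ℝ => a / y) atTop (nhds 0) := by
    have := hinvTop.const_mul a
    rw [mul_zero] at this
    exact this.congr fun y => (div_eq_mul_inv a y).symm
  -- log-part limit at -infty
  have hratioBot : Tendsto (fun y : ℝ => (a^2+y^2)/(x-y)^2) atBot (nhds 1) := by
    have h1 : Tendsto (fun y : ℝ => ((a/y)^2 + 1)/((x/y - 1)^2)) atBot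
        (nhds ((0^2 + 1)/((0 - 1)^2))) := by
      refine Tendsto.div (((haoverBot.pow 2).add_const 1)) (((hxoverBot.sub_const 1).pow 2)) ?_
      norm_num
    norm_num at h1
    refine h1.congr' ?_
    filter_upwards [eventually_lt_atBot (min x 0)] with y hy
    have hy0 : y ≠ 0 := ne_of_lt (lt_of_lt_of_le hy (min_le_right _ _))
    have hxy : x - y ≠ 0 := sub_ne_zero.mpr (lt_of_lt_of_le hy (min_le_left _ _)).ne'
    field_simp
  have hratioTop : Tendsto (fun y : ℝ => (a^2+y^2)/(y-x)^2) atTop (nhds 1) := by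
    have h1 : Tendsto (fun y : ℝ => ((a/y)^2 + 1)/((1 - x/y)^2)) atTop
        (nhds ((0^2 + 1)/((1 - 0)^2))) := by
      refine Tendsto.div (((haoverTop.pow 2).add_const 1)) (((hxoverTop.const_sub 1).pow 2)) ?_
      norm_num
    norm_num at h1
    refine h1.congr' ?_
    filter_upwards [eventually_gt_atTop (max x 0)] with y hy
    have hy0 : y ≠ 0 := (lt_of_le_of_lt (le_max_right _ _) hy).ne'
    have hxy : y - x ≠ 0 := sub_ne_zero.mpr (lt_of_le_of_lt (le_max_left _ _) hy).ne'
    field_simp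
  have hlogBot : Tendsto (fun y : ℝ => A/2 * Real.log (a^2+y^2) - A * Real.log (x-y)) atBot
      (nhds 0) := by
    have h1 : Tendsto (fun y : ℝ => (A/2) * Real.log ((a^2+y^2)/(x-y)^2)) atBot (nhds 0) := by
      have h2 : Tendsto (fun y : ℝ => Real.log ((a^2+y^2)/(x-y)^2)) atBot (nhds 0) := by
        have := (Real.continuousAt_log (x := 1) one_ne_zero).tendsto.comp hratioBot
        simpa [Function.comp_def] using this
      simpa using h2.const_mul (A/2)
    refine h1.congr' ?_
    filter_upwards [eventually_lt_atBot x] with y hy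
    have hxy : (0:ℝ) < x - y := sub_pos.mpr hy
    have hpos : (0:ℝ) < a^2 + y^2 := by
      have : y ≠ 0 ∨ a ≠ 0 := Or.inr ha.ne'
      positivity
    rw [Real.log_div hpos.ne' (by positivity), Real.log_pow]
    push_cast
    ring
  have hlogTop : Tendsto (fun y : ℝ => A/2 * Real.log (a^2+y^2) - A * Real.log (y-x)) atTop
      (nhds 0) := by
    have h1 : Tendsto (fun y : ℝ => (A/2) * Real.log ((a^2+y^2)/(y-x)^2)) atTop (nhds 0) := by
      have h2 : Tendsto (fun y : ℝ => Real.log ((a^2+y^2)/(y-x)^2)) atTop (nhds 0) := by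
        have := (Real.continuousAt_log (x := 1) one_ne_zero).tendsto.comp hratioTop
        simpa [Function.comp_def] using this
      simpa using h2.const_mul (A/2)
    refine h1.congr' ?_
    filter_upwards [eventually_gt_atTop x] with y hy
    have hxy : (0:ℝ) < y - x := sub_pos.mpr hy
    have hpos : (0:ℝ) < a^2 + y^2 := by positivity
    rw [Real.log_div hpos.ne' (by positivity), Real.log_pow]
    push_cast
    ring
  have hlimF₁ : Tendsto F₁ atBot (nhds ((B/a) * (-(Real.pi/2)))) := by
    have := hlogBot.add harctanBot
    rw [zero_add] at this
    refine this.congr fun y => ?_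
    simp only [hF₁, hG]; ring
  have hlimF₂ : Tendsto F₂ atTop (nhds ((B/a) * (Real.pi/2))) := by
    have := hlogTop.add harctanTop
    rw [zero_add] at this
    refine this.congr fun y => ?_
    simp only [hF₂, hG]; ring
  set L₁ : ℝ := (B/a) * (-(Real.pi/2)) with hL₁
  set L₂ : ℝ := (B/a) * (Real.pi/2) with hL₂
  -- measurability of the sets
  have hmeas : ∀ ε : ℝ, MeasurableSet {y : ℝ | ε < |x - y|} := by
    intro ε
    have : IsOpen {y : ℝ | ε < |x - y|} :=
      isOpen_lt continuous_const (continuous_const.sub continuous_id).abs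
    exact this.measurableSet
  -- integrability
  have hint : ∀ ε : ℝ, 0 < ε → IntegrableOn g {y : ℝ | ε < |x - y|} := by
    intro ε hε
    have hSm := hmeas ε
    have hcontOn : ContinuousOn g {y : ℝ | ε < |x - y|} := by
      apply ContinuousOn.div
      · apply Continuous.continuousOn
        exact continuous_id.div (by fun_prop) fun y => (by positivity : (0:ℝ) < a^2+y^2).ne'
      · exact (continuous_const.sub continuous_id).continuousOn
      · intro y hy
        have h2 : (0:ℝ) < |x - y| := lt_trans hε hy
        exact fun h => by rw [h] at h2; simp at h2
    refine Integrable.mono' ((integrable_inv_one_add_sq.const_mul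
        ((1 + |x|/ε) * ((1+a^2)/a^2))).restrict) (hcontOn.aestronglyMeasurable hSm) ?_
    refine (ae_restrict_iff' hSm).mpr (Filter.Eventually.of_forall fun y hy => ?_)
    have h2 : ε < |x - y| := hy
    have habs : (0:ℝ) < |x - y| := lt_trans hε h2
    have hpos : (0:ℝ) < a^2 + y^2 := by positivity
    have hstep : |y| ≤ (1 + |x|/ε) * |x - y| := by
      have t1 : |y| ≤ |x| + |x - y| := by
        calc |y| = |x + (y - x)| := by ring_nf
        _ ≤ |x| + |y - x| := abs_add_le _ _
        _ = |x| + |x - y| := by rw [abs_sub_comm]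
      have t0 : |x| = (|x|/ε) * ε := by field_simp
      have t2 : (|x|/ε) * ε ≤ (|x|/ε) * |x - y| :=
        mul_le_mul_of_nonneg_left h2.le (div_nonneg (abs_nonneg x) hε.le)
      nlinarith
    have hnorm : ‖g y‖ = |y| / ((a^2+y^2) * |x - y|) := by
      simp only [hg, Real.norm_eq_abs, abs_div, abs_mul, abs_of_pos hpos, div_div]
    rw [hnorm]
    have s1 : |y| / ((a^2+y^2) * |x - y|) ≤ ((1 + |x|/ε) * |x - y|) / ((a^2+y^2) * |x - y|) :=
      div_le_div_of_nonneg_right hstep (by positivity) |>.trans_eq rfl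
    have s2 : ((1 + |x|/ε) * |x - y|) / ((a^2+y^2) * |x - y|) = (1 + |x|/ε) / (a^2+y^2) :=
      mul_div_mul_right _ _ habs.ne'
    have key : (a^2+y^2)⁻¹ ≤ ((1+a^2)/a^2) * (1+y^2)⁻¹ := by
      have h1 : ((1+a^2)/a^2) * (1+y^2)⁻¹ = (1+a^2) / (a^2*(1+y^2)) := by
        field_simp
      rw [h1, inv_eq_one_div, div_le_div_iff₀ hpos (by positivity)]
      nlinarith [sq_nonneg (a*y), sq_nonneg a, sq_nonneg y]
    have s3 : (1 + |x|/ε) / (a^2+y^2) ≤ (1 + |x|/ε) * ((1+a^2)/a^2) * (1+y^2)⁻¹ := by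
      rw [div_eq_mul_inv, mul_assoc]
      exact mul_le_mul_of_nonneg_left key (by positivity)
    calc |y| / ((a^2+y^2) * |x - y|) ≤ (1 + |x|/ε) / (a^2+y^2) := s1.trans_eq s2
    _ ≤ (1 + |x|/ε) * ((1+a^2)/a^2) * (1+y^2)⁻¹ := s3
  -- integral formula
  have hsplit : ∀ ε : ℝ, 0 < ε →
      (∫ y in {y : ℝ | ε < |x - y|}, g y) = (F₁ (x-ε) - L₁) + (L₂ - F₂ (x+ε)) := by
    intro ε hε
    have hSeq : {y : ℝ | ε < |x - y|} = Iio (x-ε) ∪ Ioi (x+ε) := by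
      ext y
      simp only [mem_setOf_eq, mem_union, mem_Iio, mem_Ioi, lt_abs]
      constructor
      · rintro (h | h)
        · exact Or.inl (by linarith)
        · exact Or.inr (by linarith)
      · rintro (h | h)
        · exact Or.inl (by linarith)
        · exact Or.inr (by linarith)
    have hIio : IntegrableOn g (Iio (x-ε)) :=
      (hint ε hε).mono_set (by rw [hSeq]; exact subset_union_left)
    have hIoi : IntegrableOn g (Ioi (x+ε)) :=
      (hint ε hε).mono_set (by rw [hSeq]; exact subset_union_right)
    have hdisj : Disjoint (Iio (x-ε)) (Ioi (x+ε)) := by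
      rw [Set.disjoint_left]
      intro y hy1 hy2
      simp only [mem_Iio] at hy1
      simp only [mem_Ioi] at hy2
      linarith
    rw [hSeq, setIntegral_union hdisj measurableSet_Ioi hIio hIoi]
    have e1 : ∫ y in Iio (x-ε), g y = F₁ (x-ε) - L₁ := by
      rw [← integral_Iic_eq_integral_Iio]
      apply integral_Iic_of_hasDerivAt_of_tendsto
      · exact (hdF₁ _ (by linarith)).continuousAt.continuousWithinAt
      · intro y hy
        simp only [mem_Iio] at hy
        exact hdF₁ y (by linarith)
      · exact hIio.congr_set_ae Iio_ae_eq_Iic.symm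
      · exact hlimF₁
    have e2 : ∫ y in Ioi (x+ε), g y = L₂ - F₂ (x+ε) := by
      apply integral_Ioi_of_hasDerivAt_of_tendsto
      · exact (hdF₂ _ (by linarith)).continuousAt.continuousWithinAt
      · intro y hy
        simp only [mem_Ioi] at hy
        exact hdF₂ y (by linarith)
      · exact hIoi
      · exact hlimF₂
    rw [e1, e2]
  -- continuity of G and limit of the explicit formula
  have hGc : ∀ z : ℝ, ContinuousAt G z := fun z => (G_deriv a A B ha z).continuousAt
  have hΦ : Tendsto (fun ε : ℝ => (Real.pi)⁻¹ * (G (x-ε) - G (x+ε) + (B/a)*Real.pi)) (nhds 0)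
      (nhds (-(a / (a^2 + x^2)))) := by
    have t1 : Tendsto (fun ε : ℝ => x - ε) (nhds 0) (nhds x) := by
      have : Tendsto (fun ε : ℝ => x - ε) (nhds 0) (nhds (x - 0)) :=
        tendsto_const_nhds.sub tendsto_id
      simpa using this
    have t2 : Tendsto (fun ε : ℝ => x + ε) (nhds 0) (nhds x) := by
      have : Tendsto (fun ε : ℝ => x + ε) (nhds 0) (nhds (x + 0)) :=
        tendsto_const_nhds.add tendsto_id
      simpa using this
    have hmain := ((((hGc x).tendsto.comp t1).sub ((hGc x).tendsto.comp t2)).add_const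
        ((B/a)*Real.pi)).const_mul (Real.pi)⁻¹
    have hval : (Real.pi)⁻¹ * (G x - G x + (B/a)*Real.pi) = -(a / (a^2 + x^2)) := by
      rw [hB]
      field_simp
      ring
    rw [hval] at hmain
    exact hmain.congr fun ε => rfl
  -- conclusion
  refine Tendsto.congr' ?_ (hΦ.mono_left nhdsWithin_le_nhds)
  filter_upwards [self_mem_nhdsWithin] with ε hε
  have hε' : (0:ℝ) < ε := hε
  rw [hg] at hsplit
  rw [hsplit ε hε']
  have d1 : x - (x - ε) = ε := by ring
  have d2 : (x + ε) - x = ε := by ring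
  simp only [hF₁, hF₂, d1, d2, hL₁, hL₂]
  ring

end Aux

/-- The explicit self-similar solution of the Constantin–Lax–Majda equation
with data `ω₀(x) = x/(1+x²)`. -/
theorem CLM_self_similar_solution :
    (∀ t : ℝ, 0 ≤ t → t < 1 →
      IsPVHilbert
        (fun x : ℝ => (1 / (1 - t)) * ((x / (1 - t)) / (1 + (x / (1 - t)) ^ 2)))
        (fun x : ℝ => -(1 / (1 - t)) * (1 / (1 + (x / (1 - t)) ^ 2)))) ∧
    (∀ t x : ℝ, 0 ≤ t → t < 1 →
      deriv (fun s : ℝ => (1 / (1 - s)) * ((x / (1 - s)) / (1 + (x / (1 - s)) ^ 2))) t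
        + 2 * (-(1 / (1 - t)) * (1 / (1 + (x / (1 - t)) ^ 2)))
          * ((1 / (1 - t)) * ((x / (1 - t)) / (1 + (x / (1 - t)) ^ 2))) = 0) := by
  constructor
  · intro t ht0 ht
    have ha : (0:ℝ) < 1 - t := by linarith
    intro x
    have key := hilbert_poisson (1-t) x ha
    have hfeq : ∀ y : ℝ, (1/(1-t)) * ((y/(1-t))/(1+(y/(1-t))^2)) = y / ((1-t)^2 + y^2) := by
      intro y
      have h2 : (1:ℝ)+(y/(1-t))^2 ≠ 0 := by positivity
      field_simp
    have hheq : -(1/(1-t)) * (1/(1+(x/(1-t))^2)) = -((1-t) / ((1-t)^2 + x^2)) := by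
      have h2 : (1:ℝ)+(x/(1-t))^2 ≠ 0 := by positivity
      field_simp
    simp only [hfeq, hheq]
    exact key
  · intro t x ht0 ht
    have ha : (0:ℝ) < 1 - t := by linarith
    have heq : (fun s : ℝ => (1 / (1 - s)) * ((x / (1 - s)) / (1 + (x / (1 - s)) ^ 2)))
        =ᶠ[nhds t] (fun s : ℝ => x / ((1 - s)^2 + x^2)) := by
      filter_upwards [Iio_mem_nhds ht] with s hs
      have hs1 : (1:ℝ) - s ≠ 0 := by simp only [Set.mem_Iio] at hs; intro h; linarith [sub_pos.mpr hs]
      have h2 : (1:ℝ) + (x/(1-s))^2 ≠ 0 := by positivity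
      field_simp
    rw [heq.deriv_eq]
    have hden : HasDerivAt (fun s : ℝ => (1 - s)^2 + x^2) (2 * (1 - t) * (-1)) t := by
      have h1 : HasDerivAt (fun s : ℝ => 1 - s) (-1) t := by
        simpa using (hasDerivAt_id t).const_sub 1
      simpa using (h1.pow 2).add_const (x^2)
    have hpos : (0:ℝ) < (1 - t)^2 + x^2 := by positivity
    have hmain : HasDerivAt (fun s : ℝ => x / ((1 - s)^2 + x^2))
        (x * (-(2 * (1 - t) * (-1)) / ((1 - t)^2 + x^2)^2)) t := by
      have := (hden.inv hpos.ne').const_mul x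
      simpa [div_eq_mul_inv] using this
    rw [hmain.deriv]
    have h1t : (1:ℝ) - t ≠ 0 := ha.ne'
    have h2 : (1:ℝ) + (x/(1-t))^2 ≠ 0 := by positivity
    field_simp
    ring
end

section
/- Let 0 < α ≤ 1, let C = sin(απ/2) + i·cos(απ/2) ∈ ℂ, and define V : (0,∞) → ℂ by V(z) = 1/(i + C·z^α) (real power z^α for z > 0). Then V is differentiable on (0,∞) and satisfies the complex profile ODE V(z) + (1/α)·z·V'(z) = i·V(z)² for all z > 0. (Its real and imaginary parts are the odd C^α self-similar profile F^{(α)} for the Constantin–Lax–Majda equation and its Hilbert transform, respectively.) -/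
open Filter

/-- The complexified `C^α` CLM profile `V(z) = 1/(i + C z^α)` solves the
complex profile ODE `V + (1/α) z V' = i V²` on `(0,∞)`. -/
theorem complex_profile_ODE (α : ℝ) (hα : 0 < α) (hα1 : α ≤ 1)
    (C : ℂ) (hC : C = (Real.sin (α * Real.pi / 2) : ℂ)
      + Complex.I * (Real.cos (α * Real.pi / 2) : ℂ))
    (V : ℝ → ℂ) (hV : V = fun z : ℝ => 1 / (Complex.I + C * ((z ^ α : ℝ) : ℂ))) :
    DifferentiableOn ℝ V (Set.Ioi 0) ∧
    ∀ z : ℝ, 0 < z →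
      V z + ((1 / α : ℝ) : ℂ) * ((z : ℝ) : ℂ) * deriv V z
        = Complex.I * (V z) ^ 2 := by
  set D : ℝ → ℂ := fun z => Complex.I + C * ((z ^ α : ℝ) : ℂ) with hD
  -- denominator is nonzero for z > 0
  have hsin : 0 < Real.sin (α * Real.pi / 2) := by
    apply Real.sin_pos_of_pos_of_lt_pi
    · positivity
    · nlinarith [Real.pi_pos, Real.pi_gt_three]
  have hDne : ∀ z : ℝ, 0 < z → D z ≠ 0 := by
    intro z hz h
    have hre : (D z).re = Real.sin (α * Real.pi / 2) * z ^ α := by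
      simp [hD, hC, Complex.add_re, Complex.mul_re, -Complex.ofReal_sin, -Complex.ofReal_cos]
    have hpos : 0 < (D z).re := by
      rw [hre]; positivity
    rw [h] at hpos; simp at hpos
  have hderiv : ∀ z : ℝ, 0 < z →
      HasDerivAt V (-(C * ((α * z ^ (α - 1) : ℝ) : ℂ)) / (D z) ^ 2) z := by
    intro z hz
    have h1 : HasDerivAt (fun z : ℝ => z ^ α) (α * z ^ (α - 1)) z :=
      Real.hasDerivAt_rpow_const (Or.inl hz.ne')
    have h2 : HasDerivAt (fun z : ℝ => ((z ^ α : ℝ) : ℂ))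
        ((α * z ^ (α - 1) : ℝ) : ℂ) z := h1.ofReal_comp
    have h3 : HasDerivAt D (C * ((α * z ^ (α - 1) : ℝ) : ℂ)) z := by
      simpa [hD] using ((h2.const_mul C).const_add Complex.I)
    have h4 := (hasDerivAt_const z (1 : ℂ)).div h3 (hDne z hz)
    have hVeq : V = fun w => (1 : ℂ) / D w := by
      funext w; simp [hV, hD]
    rw [hVeq]
    convert h4 using 1
    · rfl
    · rfl
    · push_cast
      ring
  constructor
  · intro z hz
    exact ((hderiv z hz).differentiableAt).differentiableWithinAt
  · intro z hz
    have hd := (hderiv z hz).deriv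
    rw [hd]
    have hVz : V z = (D z)⁻¹ := by simp [hV, hD, one_div]
    have hzα : (z : ℝ) ^ α = z * z ^ (α - 1) := by
      rw [show α = 1 + (α - 1) by ring, Real.rpow_add hz, Real.rpow_one]
      ring_nf
    have hDz : D z = Complex.I + C * ((z ^ α : ℝ) : ℂ) := rfl
    rw [hVz]
    have hDne' := hDne z hz
    have hαne : (α : ℂ) ≠ 0 := by exact_mod_cast hα.ne'
    field_simp
    rw [hDz, hzα]
    push_cast
    ring_nf
    simp [hαne]
end
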